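/- Kalman update covariance equivalence: if S = H C Hᵀ + R is invertible and Z = C Hᵀ S⁻¹, then C − Z S Zᵀ = C − C Hᵀ S⁻¹ H C, and this matrix is symmetric; moreover, if C ⪰ 0 and R ⪰ 0 then C − C Hᵀ S⁻¹ H C ⪰ 0. -/

import Mathlib

open Matrix

lemma psd_isUnit_posDef {n : ℕ} {A : Matrix (Fin n) (Fin n) ℝ}
    (h : A.PosSemidef) (hu : IsUnit A) : A.PosDef := by
  refine posDef_iff_dotProduct_mulVec.mpr ⟨h.1, fun x hx => lt_of_le_of_ne ((posSemidef_iff_dotProduct_mulVec.mp h).2 x) fun heq => hx ?_⟩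
  have hAx : A *ᵥ x = 0 := (h.dotProduct_mulVec_zero_iff x).mp heq.symm
  haveI := hu.invertible
  calc x = (A⁻¹ * A) *ᵥ x := by rw [Matrix.nonsing_inv_mul A (Matrix.isUnit_iff_isUnit_det A |>.mp hu), Matrix.one_mulVec]
  _ = A⁻¹ *ᵥ (A *ᵥ x) := by rw [Matrix.mulVec_mulVec]
  _ = 0 := by rw [hAx, Matrix.mulVec_zero]

theorem stmt_11 {d D : ℕ}
    (C : Matrix (Fin D) (Fin D) ℝ) (R : Matrix (Fin d) (Fin d) ℝ)
    (H : Matrix (Fin d) (Fin D) ℝ)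
    (S : Matrix (Fin d) (Fin d) ℝ) (hS : S = H * C * Hᵀ + R)
    (hSinv : IsUnit S)
    (Z : Matrix (Fin D) (Fin d) ℝ) (hZ : Z = C * Hᵀ * S⁻¹)
    (hCsym : C.IsSymm) (hRsym : R.IsSymm) :
    (C - Z * S * Zᵀ = C - C * Hᵀ * S⁻¹ * H * C) ∧
    (C - C * Hᵀ * S⁻¹ * H * C).IsSymm ∧
    (C.PosSemidef → R.PosSemidef → (C - C * Hᵀ * S⁻¹ * H * C).PosSemidef) := by
  have hdet : IsUnit S.det := (Matrix.isUnit_iff_isUnit_det S).mp hSinv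
  have hSsym : S.IsSymm := by
    rw [hS, Matrix.IsSymm, Matrix.transpose_add, hRsym.eq, Matrix.transpose_mul,
      Matrix.transpose_mul, Matrix.transpose_transpose, hCsym.eq, Matrix.mul_assoc]
  have hSinvsym : (S⁻¹)ᵀ = S⁻¹ := by
    rw [Matrix.transpose_nonsing_inv, hSsym.eq]
  have hZT : Zᵀ = S⁻¹ * (H * C) := by
    rw [hZ, Matrix.transpose_mul, Matrix.transpose_mul, hSinvsym, Matrix.transpose_transpose,
      hCsym.eq]
  have h1 : C - Z * S * Zᵀ = C - C * Hᵀ * S⁻¹ * H * C := by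
    rw [hZT, hZ]
    rw [Matrix.mul_assoc (C * Hᵀ * S⁻¹) S, ← Matrix.mul_assoc S S⁻¹,
      Matrix.mul_nonsing_inv S hdet, Matrix.one_mul]
    simp [Matrix.mul_assoc]
  refine ⟨h1, ?_, ?_⟩
  · rw [Matrix.IsSymm, Matrix.transpose_sub, hCsym.eq]
    congr 1
    rw [Matrix.transpose_mul, Matrix.transpose_mul, Matrix.transpose_mul, Matrix.transpose_mul,
      hCsym.eq, hSinvsym, Matrix.transpose_transpose]
    simp [Matrix.mul_assoc]
  · intro hC hR
    have hHC : (H * C) * Hᵀ = H * C * Hᴴ := by simp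
    have hSpsd : S.PosSemidef := by
      rw [hS]
      exact Matrix.PosSemidef.add (by simpa using hC.mul_mul_conjTranspose_same H) hR
    have hSpd : S.PosDef := psd_isUnit_posDef hSpsd hSinv
    haveI := hSinv.invertible
    have hbig : (fromBlocks S (H * C) (H * C)ᴴ C).PosSemidef := by
      have e1 : (fromRows H (1 : Matrix (Fin D) (Fin D) ℝ)) * C *
          (fromRows H (1 : Matrix (Fin D) (Fin D) ℝ))ᴴ
          = fromBlocks (H * C * Hᵀ) (H * C) (C * Hᵀ) C := by
        rw [Matrix.fromRows_mul, Matrix.conjTranspose_fromRows_eq_fromCols_conjTranspose]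
        rw [Matrix.fromRows_mul_fromCols]
        simp
      have e2 : (fromRows (1 : Matrix (Fin d) (Fin d) ℝ) (0 : Matrix (Fin D) (Fin d) ℝ)) * R *
          (fromRows (1 : Matrix (Fin d) (Fin d) ℝ) (0 : Matrix (Fin D) (Fin d) ℝ))ᴴ
          = fromBlocks R 0 0 0 := by
        rw [Matrix.fromRows_mul, Matrix.conjTranspose_fromRows_eq_fromCols_conjTranspose]
        rw [Matrix.fromRows_mul_fromCols]
        simp
      have := (hC.mul_mul_conjTranspose_same (fromRows H 1)).add
        (hR.mul_mul_conjTranspose_same (fromRows (1 : Matrix (Fin d) (Fin d) ℝ) (0 : Matrix (Fin D) (Fin d) ℝ)))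
      rw [e1, e2] at this
      convert this using 1
      rw [Matrix.fromBlocks_add, hS]
      simp [Matrix.conjTranspose_mul, hCsym.eq]
    have := (Matrix.PosDef.fromBlocks₁₁ (H * C) C hSpd).mp hbig
    convert this using 2
    · rfl
    simp [Matrix.conjTranspose_mul, hCsym.eq, Matrix.mul_assoc]
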